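/- For q ∈ (0,1), α ∈ [0,1], and 0 ≤ r ≤ k, the coefficients a_{n,q}(r,k) of T_{n,q,α}(t^k; x) satisfy lim_{n→∞} a_{n,q}(r,k) = q^{r(r-1)/2} (1-q)^{k-r} S_q(k,r). -/

import Mathlib

open Finset Filter Topology

/-- The q-integer `[m]_q = 1 + q + ... + q^{m-1}`, with `[0]_q = 0`. -/
noncomputable def qInt (q : ℝ) (m : ℕ) : ℝ := ∑ i ∈ Finset.range m, q ^ i

/-- The q-factorial `[n]_q! = [1]_q [2]_q ⋯ [n]_q`. -/
noncomputable def qFact (q : ℝ) (n : ℕ) : ℝ := ∏ i ∈ Finset.range n, qInt q (i + 1)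

/-- The q-binomial coefficient `[n]_q!/([k]_q! [n-k]_q!)` (zero if `k > n`). -/
noncomputable def qBinom (q : ℝ) (n k : ℕ) : ℝ :=
  if k ≤ n then qFact q n / (qFact q k * qFact q (n - k)) else 0

/-- The q-Stirling number of the second kind. -/
noncomputable def qStirling (q : ℝ) (k r : ℕ) : ℝ :=
  (1 / (qFact q r * q ^ (r * (r - 1) / 2))) *
    ∑ i ∈ Finset.range (r + 1),
      (-1 : ℝ) ^ i * q ^ (i * (i - 1) / 2) * qBinom q r i * (qInt q (r - i)) ^ k

/-- The q-forward difference operator on sequences: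
`Δ_q^0 f_i = f_i`, `Δ_q^{r+1} f_i = Δ_q^r f_{i+1} - q^r Δ_q^r f_i`. -/
noncomputable def qDiff (q : ℝ) : ℕ → (ℕ → ℝ) → ℕ → ℝ
  | 0, f, i => f i
  | r + 1, f, i => qDiff q r f (i + 1) - q ^ r * qDiff q r f i

/-- The eigenvalues `λ_{k,q}^{(α,n)}` of the (α,q)-Bernstein operator. -/
noncomputable def lamEig (q α : ℝ) (n k : ℕ) : ℝ :=
  q ^ (k * (k - 1) / 2) * qFact q (n - 2) / (qFact q (n - k) * (qInt q n) ^ k) *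
    ((1 - α) * qInt q (n - k) * qInt q (n - 1 + k) + α * qInt q n * qInt q (n - 1))

/-- The coefficients `a_{n,q}(r,k)` of `T_{n,q,α}(t^k; x) = Σ_r a_{n,q}(r,k) x^r`. -/
noncomputable def aCoef (q α : ℝ) (n r k : ℕ) : ℝ :=
  q ^ (r * (r - 1) / 2) * qFact q (n - 2) / ((qInt q n) ^ k * qFact q (n - r)) *
    ((1 - α) * qInt q (n - r) *
        (qInt q (n + r - 1) * qStirling q (k + 1) (r + 1) -
          qInt q (r + 1) * qInt q (n - 1) * qStirling q k (r + 1)) +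
      α * qInt q n * qInt q (n - 1) * qStirling q k r)

/-- The (α,q)-Bernstein operator, via its forward-difference representation
`T_{n,q,α}(f;x) = Σ_{r=0}^n ((1-α) C_q(n-1,r) Δ_q^r g_0 + α C_q(n,r) Δ_q^r f_0) x^r`,
where `f_i = f([i]_q/[n]_q)` and
`g_i = (1 - q^{n-i-1}[i]_q/[n-1]_q) f_i + (q^{n-i-1}[i]_q/[n-1]_q) f_{i+1}`. -/
noncomputable def Talpha (q α : ℝ) (n : ℕ) (f : ℝ → ℝ) (x : ℝ) : ℝ :=
  let fs : ℕ → ℝ := fun i => f (qInt q i / qInt q n)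
  let gs : ℕ → ℝ := fun i =>
    (1 - q ^ (n - i - 1) * qInt q i / qInt q (n - 1)) * fs i +
      (q ^ (n - i - 1) * qInt q i / qInt q (n - 1)) * fs (i + 1)
  ∑ r ∈ Finset.range (n + 1),
    ((1 - α) * qBinom q (n - 1) r * qDiff q r gs 0 + α * qBinom q n r * qDiff q r fs 0) * x ^ r

lemma qInt_pos {q : ℝ} (hq : 0 < q) {m : ℕ} (hm : 0 < m) : 0 < qInt q m := by
  apply Finset.sum_pos (fun i _ => pow_pos hq i)
  exact Finset.nonempty_range_iff.mpr hm.ne'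

lemma qFact_pos {q : ℝ} (hq : 0 < q) (n : ℕ) : 0 < qFact q n :=
  Finset.prod_pos fun i _ => qInt_pos hq (Nat.succ_pos i)

lemma qInt_add (q : ℝ) (a b : ℕ) : qInt q (a+b) = qInt q a + q^a * qInt q b := by
  simp [qInt, Finset.sum_range_add, pow_add, Finset.mul_sum]

lemma qFact_succ (q : ℝ) (n : ℕ) : qFact q (n+1) = qFact q n * qInt q (n+1) := by
  rw [qFact, Finset.prod_range_succ]; rfl

lemma qBinom_mul {q : ℝ} (hq : 0 < q) {i r : ℕ} (hi : i ≤ r) :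
    qInt q (i+1) * qBinom q (r+1) (i+1) = qInt q (r+1) * qBinom q r i := by
  rw [qBinom, qBinom, if_pos (by omega), if_pos (by omega), Nat.succ_sub_succ,
    qFact_succ q r, qFact_succ q i]
  have h1 := (qFact_pos hq i).ne'
  have h2 := (qFact_pos hq (r - i)).ne'
  have h3 := (qInt_pos hq (Nat.succ_pos i)).ne'
  field_simp

lemma tri (j : ℕ) : (j+1)*((j+1)-1)/2 = j*(j-1)/2 + j := by
  rcases j with _ | m
  · simp
  · have : (m+1+1)*((m+1+1)-1) = (m+1)*((m+1)-1) + 2*(m+1) := by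
      simp only [Nat.add_sub_cancel]; ring
    rw [this, Nat.add_mul_div_left _ _ (by norm_num : 0 < 2)]

noncomputable def qT (q : ℝ) (k r : ℕ) : ℝ :=
  ∑ i ∈ Finset.range (r + 1),
      (-1 : ℝ) ^ i * q ^ (i * (i - 1) / 2) * qBinom q r i * (qInt q (r - i)) ^ k

lemma qStirling_eq (q : ℝ) (k r : ℕ) :
    qStirling q k r = (1 / (qFact q r * q ^ (r * (r - 1) / 2))) * qT q k r := rfl

lemma qT_rec {q : ℝ} (hq : 0 < q) (k r : ℕ) :
    qT q (k+1) (r+1) = qInt q (r+1) * (q^r * qT q k r + qT q k (r+1)) := by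
  have key : ∀ i ∈ Finset.range (r+2),
      (-1:ℝ)^i * q^(i*(i-1)/2) * qBinom q (r+1) i * (qInt q (r+1-i))^(k+1)
      = qInt q (r+1) * ((-1:ℝ)^i * q^(i*(i-1)/2) * qBinom q (r+1) i * (qInt q (r+1-i))^k)
        - (-1:ℝ)^i * (q^(i*(i-1)/2) * q^(r+1-i)) * (qInt q i * qBinom q (r+1) i)
            * (qInt q (r+1-i))^k := by
    intro i hi
    have hi' : i ≤ r+1 := by
      have := Finset.mem_range.mp hi; omega
    have hsplit : qInt q (r+1) = qInt q (r+1-i) + q^(r+1-i) * qInt q i := by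
      have h := qInt_add q (r+1-i) i
      rw [Nat.sub_add_cancel hi'] at h; exact h
    have h2 : qInt q (r+1-i) = qInt q (r+1) - q^(r+1-i) * qInt q i := by linarith
    rw [pow_succ, h2]
    ring
  have hsum := Finset.sum_congr rfl key
  have h0 : qT q (k+1) (r+1) = ∑ i ∈ Finset.range (r+2),
      (-1:ℝ)^i * q^(i*(i-1)/2) * qBinom q (r+1) i * (qInt q (r+1-i))^(k+1) := rfl
  rw [h0, hsum, Finset.sum_sub_distrib, ← Finset.mul_sum]
  have hA : (∑ i ∈ Finset.range (r+2),
      (-1:ℝ)^i * q^(i*(i-1)/2) * qBinom q (r+1) i * (qInt q (r+1-i))^k) = qT q k (r+1) := rfl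
  rw [hA]
  have hB : (∑ i ∈ Finset.range (r+2),
      (-1:ℝ)^i * (q^(i*(i-1)/2) * q^(r+1-i)) * (qInt q i * qBinom q (r+1) i)
        * (qInt q (r+1-i))^k) = -(qInt q (r+1) * (q^r * qT q k r)) := by
    rw [Finset.sum_range_succ']
    have hzero : qInt q 0 = 0 := by simp [qInt]
    have h00 : (-1:ℝ)^0 * (q^(0*(0-1)/2) * q^(r+1-0)) * (qInt q 0 * qBinom q (r+1) 0)
        * (qInt q (r+1-0))^k = 0 := by rw [hzero]; ring
    rw [h00, add_zero]
    have hterm : ∀ j ∈ Finset.range (r+1),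
        (-1:ℝ)^(j+1) * (q^((j+1)*((j+1)-1)/2) * q^(r+1-(j+1)))
            * (qInt q (j+1) * qBinom q (r+1) (j+1)) * (qInt q (r+1-(j+1)))^k
        = -(qInt q (r+1) * (q^r * ((-1:ℝ)^j * q^(j*(j-1)/2) * qBinom q r j
            * (qInt q (r-j))^k))) := by
      intro j hj
      have hj' : j ≤ r := by have := Finset.mem_range.mp hj; omega
      have hbm := qBinom_mul hq hj'
      have hexp : (j+1)*((j+1)-1)/2 = j*(j-1)/2 + j := tri j
      have hq1 : q^((j+1)*((j+1)-1)/2) * q^(r+1-(j+1)) = q^(j*(j-1)/2) * q^r := by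
        rw [hexp, pow_add, Nat.succ_sub_succ, mul_assoc, ← pow_add]
        congr 2
        omega
      rw [hq1, Nat.succ_sub_succ, pow_succ]
      calc (-1:ℝ)^j * (-1) * (q^(j*(j-1)/2) * q^r) * (qInt q (j+1) * qBinom q (r+1) (j+1))
            * (qInt q (r-j))^k
          = -((-1:ℝ)^j * (q^(j*(j-1)/2) * q^r) * (qInt q (j+1) * qBinom q (r+1) (j+1))
            * (qInt q (r-j))^k) := by ring
        _ = -(qInt q (r+1) * (q^r * ((-1:ℝ)^j * q^(j*(j-1)/2) * qBinom q r j
            * (qInt q (r-j))^k))) := by rw [hbm]; ring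
    rw [Finset.sum_congr rfl hterm, Finset.sum_neg_distrib, ← Finset.mul_sum, ← Finset.mul_sum, qT]
  rw [hB]
  ring

lemma qStirling_rec {q : ℝ} (hq : 0 < q) (k r : ℕ) :
    qStirling q (k+1) (r+1) = qStirling q k r + qInt q (r+1) * qStirling q k (r+1) := by
  rw [qStirling_eq, qStirling_eq, qStirling_eq, qT_rec hq]
  have hFs : qFact q (r+1) = qFact q r * qInt q (r+1) := qFact_succ q r
  have hPs : q ^ ((r+1) * ((r+1)-1) / 2) = q ^ (r*(r-1)/2) * q ^ r := by
    rw [tri r, pow_add]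
  have h1 := (qFact_pos hq r).ne'
  have h2 := (qInt_pos hq (Nat.succ_pos r)).ne'
  have h3 : q ^ (r*(r-1)/2) ≠ 0 := pow_ne_zero _ hq.ne'
  have h4 : (q:ℝ) ^ r ≠ 0 := pow_ne_zero _ hq.ne'
  rw [hFs, hPs]
  field_simp

lemma qFact_split (q : ℝ) {r n : ℕ} (h : r ≤ n) :
    qFact q n = qFact q (n - r) * ∏ i ∈ Finset.range r, qInt q (n - i) := by
  have hn : n = (n - r) + r := by omega
  rw [qFact]
  rw [show Finset.range n = Finset.range ((n-r)+r) by rw [← hn]]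
  rw [Finset.prod_range_add]
  congr 1
  rw [← Finset.prod_range_reflect]
  apply Finset.prod_congr rfl
  intro i hi
  have := Finset.mem_range.mp hi
  congr 1
  omega

lemma qInt_tendsto {q : ℝ} (hq0 : 0 < q) (hq1 : q < 1) :
    Tendsto (fun n : ℕ => qInt q n) atTop (𝓝 (1/(1-q))) := by
  have hpow : Tendsto (fun n:ℕ => q^n) atTop (𝓝 0) :=
    tendsto_pow_atTop_nhds_zero_of_lt_one hq0.le hq1
  have h : Tendsto (fun n:ℕ => (q^n - 1)/(q-1)) atTop (𝓝 ((0-1)/(q-1))) :=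
    (hpow.sub (tendsto_const_nhds (x := (1:ℝ)))).div_const (q-1)
  have heq : (fun n:ℕ => (q^n - 1)/(q-1)) = fun n => qInt q n := by
    funext n; rw [qInt, geom_sum_eq (by linarith) n]
  rw [heq] at h
  convert h using 2
  rw [div_eq_div_iff (by linarith : (1:ℝ)-q ≠ 0) (by linarith : q-(1:ℝ) ≠ 0)]
  ring


theorem aCoef_limit_q_lt_one (q α : ℝ) (hq0 : 0 < q) (hq1 : q < 1)
    (hα : α ∈ Set.Icc (0 : ℝ) 1) (r k : ℕ) (hk : 1 ≤ k) (hr : r ≤ k) :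
    Filter.Tendsto (fun n : ℕ => aCoef q α n r k) Filter.atTop
      (nhds (q ^ (r * (r - 1) / 2) * (1 - q) ^ (k - r) * qStirling q k r)) := by
  have h1q : (1:ℝ) - q ≠ 0 := by linarith
  set c : ℝ := 1/(1-q) with hc
  have hcne : c ≠ 0 := one_div_ne_zero h1q
  have hInt : Tendsto (fun n : ℕ => qInt q n) atTop (𝓝 c) := qInt_tendsto hq0 hq1
  have hcomp : ∀ f : ℕ → ℕ, Tendsto f atTop atTop →
      Tendsto (fun n => qInt q (f n)) atTop (𝓝 c) := fun f hf => hInt.comp hf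
  have hsub : ∀ i : ℕ, Tendsto (fun n : ℕ => n - i) atTop atTop := fun i =>
    tendsto_atTop_atTop.2 fun b => ⟨b + i, fun n hn => by omega⟩
  have haddsub : Tendsto (fun n : ℕ => n + r - 1) atTop atTop :=
    tendsto_atTop_atTop.2 fun b => ⟨b + 1, fun n hn => by omega⟩
  set S1 := qStirling q (k+1) (r+1)
  set S2 := qStirling q k (r+1)
  set S3 := qStirling q k r
  set Br : ℕ → ℝ := fun n => (1 - α) * qInt q (n - r) *
        (qInt q (n + r - 1) * S1 - qInt q (r + 1) * qInt q (n - 1) * S2) +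
      α * qInt q n * qInt q (n - 1) * S3 with hBr
  have hbr : Tendsto Br atTop
      (𝓝 ((1 - α) * c * (c * S1 - qInt q (r+1) * c * S2) + α * c * c * S3)) := by
    apply Tendsto.add
    · exact (tendsto_const_nhds.mul (hcomp _ (hsub r))).mul
        (((hcomp _ haddsub).mul_const S1).sub
          ((tendsto_const_nhds.mul (hcomp _ (hsub 1))).mul_const S2))
    · exact ((tendsto_const_nhds.mul hInt).mul (hcomp _ (hsub 1))).mul_const S3
  have hprod : Tendsto (fun n : ℕ => ∏ i ∈ Finset.range r, qInt q (n - i)) atTop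
      (𝓝 (c ^ r)) := by
    have h := tendsto_finset_prod (Finset.range r)
      (fun i (_ : i ∈ Finset.range r) => hcomp _ (hsub i))
    simpa using h
  have hden : Tendsto (fun n : ℕ => qInt q n ^ k * (qInt q (n-1) * qInt q n)) atTop
      (𝓝 (c ^ k * (c * c))) := (hInt.pow k).mul ((hcomp _ (hsub 1)).mul hInt)
  have hdne : c ^ k * (c * c) ≠ 0 :=
    mul_ne_zero (pow_ne_zero _ hcne) (mul_ne_zero hcne hcne)
  set g : ℕ → ℝ := fun n => q ^ (r * (r - 1) / 2) *
      ((∏ i ∈ Finset.range r, qInt q (n - i)) / (qInt q n ^ k * (qInt q (n-1) * qInt q n))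
        * Br n) with hg
  have hgt : Tendsto g atTop (𝓝 (q ^ (r * (r - 1) / 2) *
      ((c ^ r / (c ^ k * (c * c))) *
        ((1 - α) * c * (c * S1 - qInt q (r+1) * c * S2) + α * c * c * S3)))) :=
    tendsto_const_nhds.mul ((hprod.div hden hdne).mul hbr)
  have hval : q ^ (r * (r - 1) / 2) *
      ((c ^ r / (c ^ k * (c * c))) *
        ((1 - α) * c * (c * S1 - qInt q (r+1) * c * S2) + α * c * c * S3))
      = q ^ (r * (r - 1) / 2) * (1 - q) ^ (k - r) * S3 := by
    have hrec : S1 = S3 + qInt q (r+1) * S2 := qStirling_rec hq0 k r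
    have hB2 : (1 - α) * c * (c * S1 - qInt q (r+1) * c * S2) + α * c * c * S3
        = c * c * S3 := by linear_combination ((1-α)*c*c) * hrec
    rw [hB2]
    have hkk : k = r + (k - r) := by omega
    rw [hkk, pow_add]
    have hcm : c ^ (k - r) = ((1-q) ^ (k-r))⁻¹ := by
      rw [hc, one_div, inv_pow]
    rw [hcm]
    rw [Nat.add_sub_cancel_left]
    have hpr : c ^ r ≠ 0 := pow_ne_zero _ hcne
    have hpm : ((1:ℝ)-q) ^ (k-r) ≠ 0 := pow_ne_zero _ h1q
    field_simp
  rw [hval] at hgt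
  apply hgt.congr'
  filter_upwards [eventually_ge_atTop (r+2)] with n hn
  have h2 : 2 ≤ n := by omega
  have hrn : r ≤ n := by omega
  have hsplit2 : qFact q n = qFact q (n-2) * (qInt q n * qInt q (n-1)) := by
    rw [qFact_split q h2]
    congr 1
    rw [Finset.prod_range_succ, Finset.prod_range_one]
    norm_num
  have hsplitr : qFact q n = qFact q (n-r) * ∏ i ∈ Finset.range r, qInt q (n-i) :=
    qFact_split q hrn
  have key : qFact q (n-2) * (qInt q n * qInt q (n-1))
      = qFact q (n-r) * ∏ i ∈ Finset.range r, qInt q (n-i) := by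
    rw [← hsplit2, ← hsplitr]
  have hF2 := (qFact_pos hq0 (n-2)).ne'
  have hFr := (qFact_pos hq0 (n-r)).ne'
  have hIn := (qInt_pos hq0 (by omega : 0 < n)).ne'
  have hIn1 := (qInt_pos hq0 (by omega : 0 < n-1)).ne'
  have hInk : qInt q n ^ k ≠ 0 := pow_ne_zero _ hIn
  rw [hg]
  show q ^ (r * (r - 1) / 2) *
      ((∏ i ∈ Finset.range r, qInt q (n - i)) / (qInt q n ^ k * (qInt q (n-1) * qInt q n))
        * Br n)
    = aCoef q α n r k
  have hac : aCoef q α n r k = q ^ (r * (r - 1) / 2) * qFact q (n - 2) /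
      (qInt q n ^ k * qFact q (n - r)) * Br n := rfl
  rw [hac]
  have hdiv : (∏ i ∈ Finset.range r, qInt q (n - i)) /
        (qInt q n ^ k * (qInt q (n-1) * qInt q n))
      = qFact q (n-2) / (qInt q n ^ k * qFact q (n-r)) := by
    rw [div_eq_div_iff (mul_ne_zero hInk (mul_ne_zero hIn1 hIn))
      (mul_ne_zero hInk hFr)]
    linear_combination (-(qInt q n ^ k)) * key
  rw [hdiv]
  ring
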